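/- arXiv:1104.0973 — 2 statements merged into one kernel-verified Lean document; each statement's English description precedes it below -/
import Mathlib

section
/- For n ≥ 2, the Dynkin element P_n = T_{P_{1,n}} in ℂ[B_n] satisfies P_n = (1 - σ_{n-1}σ_{n-2}⋯σ_1)(1 - σ_{n-1}σ_{n-2}⋯σ_2)⋯(1 - σ_{n-1}σ_{n-2})(1 - σ_{n-1}), where P_{1,n} ∈ ℂ[S_n] is defined recursively by P_{i,i} = 1, P_{i,i+1} = 1 - (i,i+1), and P_{i,j} = P_{i+1,j} - P_{i,j-1}·(i,j,j-1,…,i+1), and T is the Matsumoto section applied term by term (each signed permutation in P_{1,n} lifts to its Matsumoto lift with the same sign). -/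
open scoped BigOperators

/-- The adjacent transposition `s_k = (k, k+1)` (0-indexed) in `S_n`. -/
def adjSwap (n k : ℕ) : Equiv.Perm (Fin n) :=
  if h : k + 1 < n then Equiv.swap ⟨k, Nat.lt_of_succ_lt h⟩ ⟨k + 1, h⟩ else 1

/-- The cycle `(i, j, j-1, …, i+1)` of `S_n` (sending `i ↦ j` and `k ↦ k-1` for
`i < k ≤ j`; 1-indexed), written as the product
`s_{j-1} s_{j-2} ⋯ s_i` of adjacent transpositions. -/
def descCycle (n i j : ℕ) : Equiv.Perm (Fin n) :=
  ((List.range (j - i)).map (fun t => adjSwap n (j - 2 - t))).prod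


section DWord
variable {M : Type*} [Monoid M] (σ : ℕ → M)

def dWord (b a : ℕ) : M := ((List.range (a - b)).map (fun t => σ (a - t))).prod

lemma dWord_self (b : ℕ) : dWord σ b b = 1 := by simp [dWord]

lemma dWord_of_le {b a : ℕ} (h : a ≤ b) : dWord σ b a = 1 := by
  simp [dWord, Nat.sub_eq_zero_of_le h]

lemma dWord_succ_left {b a : ℕ} (h : b ≤ a) : dWord σ b (a + 1) = σ (a + 1) * dWord σ b a := by
  have h1 : a + 1 - b = (a - b) + 1 := by omega
  have h2 : ((fun t => σ (a + 1 - t)) ∘ (fun x => x + 1)) = fun t => σ (a - t) := by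
    funext t; simp [Function.comp, Nat.succ_sub_succ]
  rw [dWord, h1, List.range_succ_eq_map, List.map_cons, List.prod_cons, List.map_map, h2]
  norm_num [dWord]

lemma dWord_succ_right {b a : ℕ} (h : b < a) : dWord σ b a = dWord σ (b + 1) a * σ (b + 1) := by
  have h1 : a - b = (a - (b + 1)) + 1 := by omega
  rw [dWord, h1, List.range_succ, List.map_append, List.prod_append]
  congr 1
  simp only [List.map_singleton, List.prod_singleton]
  congr 1
  omega

lemma dWord_append {b m a : ℕ} (hbm : b ≤ m) (hma : m ≤ a) :
    dWord σ b a = dWord σ m a * dWord σ b m := by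
  induction m, hbm using Nat.le_induction with
  | base => simp [dWord_self]
  | succ m hbm ih =>
    have hma' : m ≤ a := by omega
    rw [ih hma', dWord_succ_right σ (show m < a by omega), dWord_succ_left σ hbm, mul_assoc]
end DWord

section Braid
variable {M : Type*} [Monoid M] (σ : ℕ → M) (N : ℕ)
  (hcomm : ∀ i j, 1 ≤ i → i + 2 ≤ j → j ≤ N → σ i * σ j = σ j * σ i)
  (hbraid : ∀ i, 1 ≤ i → i + 1 ≤ N → σ i * σ (i + 1) * σ i = σ (i + 1) * σ i * σ (i + 1))

include hcomm in
lemma comm_dWord_hi {b : ℕ} (t : ℕ) (ht : t ≤ N) :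
    ∀ m, m + 2 ≤ t → σ t * dWord σ b m = dWord σ b m * σ t := by
  intro m
  induction m with
  | zero => intro _; simp [dWord_of_le σ (Nat.zero_le b)]
  | succ m ih =>
    intro hmt
    by_cases hbm : b ≤ m
    · rw [dWord_succ_left σ hbm, ← mul_assoc, ← hcomm (m+1) t (by omega) (by omega) ht,
        mul_assoc, ih (by omega), mul_assoc]
    · rw [dWord_of_le σ (by omega)]; simp

include hcomm in
lemma comm_dWord_lo {b : ℕ} (s : ℕ) (hs : 1 ≤ s) (hsb : s + 2 ≤ b + 1) :
    ∀ m, m ≤ N → σ s * dWord σ b m = dWord σ b m * σ s := by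
  intro m
  induction m with
  | zero => intro _; simp [dWord_of_le σ (Nat.zero_le b)]
  | succ m ih =>
    intro hmN
    by_cases hbm : b ≤ m
    · rw [dWord_succ_left σ hbm, ← mul_assoc, hcomm s (m+1) hs (by omega) hmN,
        mul_assoc, ih (by omega), mul_assoc]
    · rw [dWord_of_le σ (by omega)]; simp

include hcomm hbraid in
lemma dWord_shift {b a t : ℕ} (hbt : b + 2 ≤ t) (hta : t ≤ a) (haN : a ≤ N) :
    dWord σ b a * σ t = σ (t - 1) * dWord σ b a := by
  obtain ⟨t', rfl⟩ : ∃ t', t = t' + 2 := ⟨t - 2, by omega⟩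
  have e1 : dWord σ b a = dWord σ (t'+2) a * dWord σ b (t'+2) :=
    dWord_append σ (by omega) hta
  have e2 : dWord σ b (t'+2) = σ (t'+2) * dWord σ b (t'+1) := dWord_succ_left σ (by omega)
  have e3 : dWord σ b (t'+1) = σ (t'+1) * dWord σ b t' := dWord_succ_left σ (by omega)
  have c1 : dWord σ b t' * σ (t'+2) = σ (t'+2) * dWord σ b t' :=
    (comm_dWord_hi σ N hcomm (t'+2) (by omega) t' (by omega)).symm
  have c2 : ∀ X, dWord σ (t'+2) a * (σ (t'+1) * X) = σ (t'+1) * (dWord σ (t'+2) a * X) := by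
    intro X
    rw [← mul_assoc, ← comm_dWord_lo σ N hcomm (t'+1) (by omega) (by omega) a haN, mul_assoc]
  have key : ∀ X : M, σ (t'+2) * (σ (t'+1) * (σ (t'+2) * X)) =
      σ (t'+1) * (σ (t'+2) * (σ (t'+1) * X)) := by
    intro X
    have hb := hbraid (t'+1) (by omega) (by omega)
    calc σ (t'+2) * (σ (t'+1) * (σ (t'+2) * X)) = σ (t'+2) * σ (t'+1) * σ (t'+2) * X := by
          simp [mul_assoc]
      _ = σ (t'+1) * σ (t'+2) * σ (t'+1) * X := by rw [← hb]
      _ = σ (t'+1) * (σ (t'+2) * (σ (t'+1) * X)) := by simp [mul_assoc]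
  rw [e1, e2, e3]
  simp only [mul_assoc]
  rw [c1, key (dWord σ b t'), show t' + 2 - 1 = t' + 1 from rfl, ← mul_assoc, ← c2, mul_assoc]

include hcomm hbraid in
lemma dWord_conj {b e a : ℕ} (hbe : b < e) (hea : e ≤ a) (haN : a ≤ N) :
    dWord σ b a * dWord σ e a = dWord σ (e - 1) (a - 1) * dWord σ b a := by
  obtain ⟨k, hk⟩ : ∃ k, a - e = k := ⟨a - e, rfl⟩
  induction k generalizing e with
  | zero =>
    have he : e = a := by omega
    subst he
    rw [dWord_self, dWord_self]; simp
  | succ k ih =>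
    have hea' : e < a := by omega
    have H := ih (e := e + 1) (by omega) (by omega) (by omega)
    rw [dWord_succ_right σ hea', ← mul_assoc, H, mul_assoc,
      dWord_shift σ N hcomm hbraid (show b + 2 ≤ e + 1 by omega) (by omega) haN, ← mul_assoc]
    congr 1
    simp only [Nat.add_sub_cancel]
    have h2 := dWord_succ_right σ (show e - 1 < a - 1 by omega)
    rw [show e - 1 + 1 = e by omega] at h2
    exact h2.symm
end Braid


lemma adjSwap_val {n k : ℕ} (h : k + 1 < n) (x : Fin n) :
    ((adjSwap n k x) : ℕ) = if (x : ℕ) = k then k + 1 else if (x : ℕ) = k + 1 then k else x := by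
  unfold adjSwap
  rw [dif_pos h]
  rcases x with ⟨x, hx⟩
  simp only [Equiv.swap_apply_def, Fin.mk.injEq]
  split_ifs <;> simp_all [Fin.ext_iff]

lemma adjSwap_apply_ne {n : ℕ} (k : ℕ) (x : Fin n) (h1 : (x : ℕ) ≠ k)
    (h2 : (x : ℕ) ≠ k + 1) : adjSwap n k x = x := by
  unfold adjSwap
  split_ifs with h
  · exact Equiv.swap_apply_of_ne_of_ne (by simp [Fin.ext_iff]; omega) (by simp [Fin.ext_iff]; omega)
  · rfl

lemma adjSwap_apply_left {n : ℕ} (k : ℕ) (h : k + 1 < n) :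
    adjSwap n k ⟨k, Nat.lt_of_succ_lt h⟩ = ⟨k + 1, h⟩ := by
  unfold adjSwap
  rw [dif_pos h]
  exact Equiv.swap_apply_left _ _

lemma adjSwap_apply_right {n : ℕ} (k : ℕ) (h : k + 1 < n) :
    adjSwap n k ⟨k + 1, h⟩ = ⟨k, Nat.lt_of_succ_lt h⟩ := by
  unfold adjSwap
  rw [dif_pos h]
  exact Equiv.swap_apply_right _ _

lemma adjSwap_comm {n : ℕ} (a b : ℕ) (hab : a + 2 ≤ b) :
    adjSwap n a * adjSwap n b = adjSwap n b * adjSwap n a := by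
  rcases lt_or_ge (b + 1) n with hb | hb
  · have ha : a + 1 < n := by omega
    ext x
    simp only [Equiv.Perm.mul_apply, Fin.ext_iff, adjSwap_val ha, adjSwap_val hb]
    split_ifs <;> omega
  · have : adjSwap n b = 1 := by unfold adjSwap; rw [dif_neg (by omega)]
    rw [this, mul_one, one_mul]

set_option maxHeartbeats 2000000 in
lemma adjSwap_braid {n : ℕ} (a : ℕ) (h : a + 2 < n) :
    adjSwap n a * adjSwap n (a + 1) * adjSwap n a
      = adjSwap n (a + 1) * adjSwap n a * adjSwap n (a + 1) := by
  have h1 : a + 1 < n := by omega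
  have h2 : a + 1 + 1 < n := by omega
  ext x
  simp only [Equiv.Perm.mul_apply, Fin.ext_iff, adjSwap_val h1, adjSwap_val h2]
  split_ifs <;> omega

lemma inv_card_adjSwap {n : ℕ} (k : ℕ) (h : k + 1 < n) (w : Equiv.Perm (Fin n))
    (hw : (w⁻¹ ⟨k, Nat.lt_of_succ_lt h⟩ : Fin n) < w⁻¹ ⟨k + 1, h⟩) :
    (Finset.univ.filter (fun p : Fin n × Fin n =>
        p.1 < p.2 ∧ (adjSwap n k * w) p.2 < (adjSwap n k * w) p.1)).card =
      (Finset.univ.filter (fun p : Fin n × Fin n =>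
        p.1 < p.2 ∧ w p.2 < w p.1)).card + 1 := by
  set K : Fin n := ⟨k, Nat.lt_of_succ_lt h⟩ with hK
  set K' : Fin n := ⟨k + 1, h⟩ with hK'
  set i0 := w⁻¹ K with hi0
  set j0 := w⁻¹ K' with hj0
  have hwi0 : w i0 = K := Equiv.apply_symm_apply w K
  have hwj0 : w j0 = K' := Equiv.apply_symm_apply w K'
  have heqi : ∀ i : Fin n, ((w i : ℕ) = k) ↔ i = i0 := by
    intro i
    constructor
    · intro hv
      have : w i = K := Fin.ext hv
      rw [hi0, ← this]; simp
    · rintro rfl; rw [hwi0]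
  have heqj : ∀ j : Fin n, ((w j : ℕ) = k + 1) ↔ j = j0 := by
    intro j
    constructor
    · intro hv
      have : w j = K' := Fin.ext hv
      rw [hj0, ← this]; simp
    · rintro rfl; rw [hwj0]
  have key : ∀ i j : Fin n, i < j →
      ((adjSwap n k (w j) : Fin n) < adjSwap n k (w i) ↔ ((i, j) = (i0, j0) ∨ w j < w i)) := by
    intro i j hij
    have hne : ((w i : ℕ)) ≠ ((w j : ℕ)) := by
      intro hv
      exact absurd (w.injective (Fin.ext hv)) (Fin.ne_of_lt hij)
    by_cases hbad : ((w j : ℕ) = k ∧ (w i : ℕ) = k + 1)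
    · exfalso
      have hji0 : j = i0 := (heqi j).1 hbad.1
      have hij0 : i = j0 := (heqj i).1 hbad.2
      rw [Fin.lt_def] at hij hw
      omega
    · have hpair : ((i, j) = (i0, j0)) ↔ ((w i : ℕ) = k ∧ (w j : ℕ) = k + 1) := by
        rw [Prod.mk.injEq, heqi i, heqj j, and_comm]
      rw [hpair, Fin.lt_def, Fin.lt_def, adjSwap_val h, adjSwap_val h]
      push_neg at hbad
      split_ifs <;> omega
  have hnotmem : (i0, j0) ∉ Finset.univ.filter (fun p : Fin n × Fin n =>
      p.1 < p.2 ∧ w p.2 < w p.1) := by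
    simp only [Finset.mem_filter, Finset.mem_univ, true_and, not_and]
    intro _
    rw [hwi0, hwj0, Fin.lt_def]
    simp [hK, hK']
  have hset : (Finset.univ.filter (fun p : Fin n × Fin n =>
        p.1 < p.2 ∧ (adjSwap n k * w) p.2 < (adjSwap n k * w) p.1)) =
      insert (i0, j0) (Finset.univ.filter (fun p : Fin n × Fin n =>
        p.1 < p.2 ∧ w p.2 < w p.1)) := by
    apply Finset.ext; rintro ⟨i, j⟩
    simp only [Finset.mem_filter]
    simp only [Finset.mem_insert, Finset.mem_filter, Finset.mem_univ, true_and,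
      Equiv.Perm.mul_apply]
    constructor
    · rintro ⟨hij, hlt⟩
      rcases (key i j hij).1 hlt with hp | hp
      · exact Or.inl hp
      · exact Or.inr ⟨hij, hp⟩
    · rintro (hp | ⟨hij, hlt⟩)
      · obtain ⟨h1, h2⟩ := Prod.mk.injEq .. ▸ hp
        subst h1; subst h2
        exact ⟨hw, (key i0 j0 hw).2 (Or.inl rfl)⟩
      · exact ⟨hij, (key i j hij).2 (Or.inr hlt)⟩
  rw [hset, Finset.card_insert_of_notMem hnotmem]

section Fix
variable {n : ℕ}

local notation "σP" => (fun c => adjSwap n (c - 1))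

lemma dWordP_fix_lt {b : ℕ} : ∀ a (x : Fin n), (x : ℕ) < b → dWord σP b a x = x := by
  intro a
  induction a with
  | zero => intro x _; rw [dWord_of_le _ (Nat.zero_le b)]; rfl
  | succ a ih =>
    intro x hx
    by_cases hba : b ≤ a
    · rw [dWord_succ_left _ hba]
      simp only [Equiv.Perm.mul_apply, Nat.succ_sub_one]
      rw [ih x hx, adjSwap_apply_ne a x (by omega) (by omega)]
    · rw [dWord_of_le _ (by omega)]; rfl

lemma dWordP_fix_gt {b : ℕ} : ∀ a (x : Fin n), a < (x : ℕ) → dWord σP b a x = x := by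
  intro a
  induction a with
  | zero =>
    intro x hx
    by_cases hb : b = 0
    · subst hb; rw [dWord_self]; rfl
    · rw [dWord_of_le _ (by omega)]; rfl
  | succ a ih =>
    intro x hx
    by_cases hba : b ≤ a
    · rw [dWord_succ_left _ hba]
      simp only [Equiv.Perm.mul_apply, Nat.succ_sub_one]
      rw [ih x (by omega), adjSwap_apply_ne a x (by omega) (by omega)]
    · rw [dWord_of_le _ (by omega)]; rfl

lemma dWordP_apply_base {b : ℕ} (hb : b < n) :
    ∀ a, b ≤ a → (ha : a < n) → dWord σP b a ⟨b, hb⟩ = ⟨a, ha⟩ := by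
  intro a
  induction a with
  | zero =>
    intro hba _
    rw [dWord_of_le _ (Nat.zero_le b)]
    simp only [Equiv.Perm.one_apply, Fin.mk.injEq]
    omega
  | succ a ih =>
    intro hba ha
    by_cases hba' : b ≤ a
    · rw [dWord_succ_left _ hba']
      simp only [Equiv.Perm.mul_apply, Nat.succ_sub_one]
      rw [ih hba' (by omega), adjSwap_apply_left a ha]
    · rw [dWord_of_le _ (by omega)]
      simp only [Equiv.Perm.one_apply]
      congr 1
      omega
end Fix

section Lift
variable {n : ℕ} {G : Type*} [Group G] (σ : ℕ → G) (T : Equiv.Perm (Fin n) → G)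
  (hT : ∀ (w : Equiv.Perm (Fin n)) (i : ℕ), i + 1 < n →
      (Finset.univ.filter (fun p : Fin n × Fin n =>
          p.1 < p.2 ∧ (adjSwap n i * w) p.2 < (adjSwap n i * w) p.1)).card =
        (Finset.univ.filter (fun p : Fin n × Fin n =>
          p.1 < p.2 ∧ w p.2 < w p.1)).card + 1 →
      T (adjSwap n i * w) = σ (i + 1) * T w)

local notation "σP" => (fun c => adjSwap n (c - 1))

include hT in
lemma T_dWord_mul {b : ℕ} (hb : b < n) :
    ∀ a, b ≤ a → a ≤ n - 1 → ∀ v : Equiv.Perm (Fin n),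
      (∀ x : Fin n, (x : ℕ) ≤ b → v x = x) →
      T (dWord σP b a * v) = dWord σ b a * T v := by
  intro a hba
  induction a, hba using Nat.le_induction with
  | base => intro _ v _; rw [dWord_self, dWord_self, one_mul, one_mul]
  | succ a hba ih =>
    intro haN v hv
    have han : a + 1 < n := by omega
    have e1 : dWord σP b (a + 1) * v = adjSwap n a * (dWord σP b a * v) := by
      rw [dWord_succ_left _ hba, Nat.succ_sub_one, mul_assoc]
    set u : Equiv.Perm (Fin n) := dWord σP b a * v with hu
    have hua : u⁻¹ ⟨a, Nat.lt_of_succ_lt han⟩ = ⟨b, hb⟩ := by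
      rw [Equiv.Perm.inv_eq_iff_eq, hu, Equiv.Perm.mul_apply, hv ⟨b, hb⟩ le_rfl,
        dWordP_apply_base hb a hba (Nat.lt_of_succ_lt han)]
    have hua1 : u⁻¹ ⟨a + 1, han⟩ = v⁻¹ ⟨a + 1, han⟩ := by
      rw [hu, mul_inv_rev, Equiv.Perm.mul_apply]
      congr 1
      rw [Equiv.Perm.inv_eq_iff_eq, dWordP_fix_gt a ⟨a + 1, han⟩ (by simp)]
    have hvlt : b < ((v⁻¹ ⟨a + 1, han⟩ : Fin n) : ℕ) := by
      by_contra hle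
      push_neg at hle
      have h2 := hv (v⁻¹ ⟨a + 1, han⟩) hle
      rw [show v (v⁻¹ ⟨a + 1, han⟩) = ⟨a + 1, han⟩ from Equiv.apply_symm_apply v _] at h2
      have h3 := congrArg Fin.val h2
      simp only [Fin.val_mk] at h3
      omega
    have hw : u⁻¹ ⟨a, Nat.lt_of_succ_lt han⟩ < u⁻¹ ⟨a + 1, han⟩ := by
      rw [hua, hua1, Fin.lt_def]
      simpa using hvlt
    rw [e1, hT u a han (inv_card_adjSwap a han u hw), ih (by omega) v hv,
      dWord_succ_left σ hba, mul_assoc]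

lemma prodP_fix (l : List ℕ) (c : ℕ) (hl : ∀ y ∈ l, c < y) (x : Fin n) (hx : (x : ℕ) < c) :
    ((l.map (fun k => dWord σP (k - 1) (n - 1))).prod) x = x := by
  induction l with
  | nil => rfl
  | cons m l' ih =>
    simp only [List.map_cons, List.prod_cons, Equiv.Perm.mul_apply]
    rw [ih (fun y hy => hl y (by simp [hy]))]
    have hm : c < m := hl m (by simp)
    exact dWordP_fix_lt (n - 1) x (by omega)

include hT in
lemma T_cycleProd :
    ∀ (l : List ℕ), l.Chain' (· < ·) → (∀ x ∈ l, 1 ≤ x ∧ x ≤ n - 1) →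
      (hT1 : T 1 = 1) →
      T ((l.map (fun k => dWord σP (k - 1) (n - 1))).prod) =
        (l.map (fun k => dWord σ (k - 1) (n - 1))).prod := by
  intro l
  induction l with
  | nil => intro _ _ hT1; simpa using hT1
  | cons k l ih =>
    intro hchain hmem hT1
    have hk : 1 ≤ k ∧ k ≤ n - 1 := hmem k (by simp)
    have hn2 : 2 ≤ n := by omega
    simp only [List.map_cons, List.prod_cons]
    have hlgt : ∀ y ∈ l, k < y :=
      (List.pairwise_cons.mp (List.isChain_iff_pairwise.mp hchain)).1
    have hfix : ∀ x : Fin n, (x : ℕ) ≤ k - 1 →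
        ((l.map (fun k => dWord σP (k - 1) (n - 1))).prod) x = x := by
      intro x hx
      exact prodP_fix l k hlgt x (by omega)
    have := T_dWord_mul σ T hT (b := k - 1) (by omega) (n - 1) (by omega) (by omega)
      ((l.map (fun k => dWord σP (k - 1) (n - 1))).prod) hfix
    rw [this, ih (hchain.tail) (fun x hx => hmem x (by simp [hx])) hT1]
end Lift


lemma descCycle_eq_dWord {n i j : ℕ} (h : 1 ≤ i) :
    descCycle n i j = dWord (fun c => adjSwap n (c - 1)) (i - 1) (j - 1) := by
  unfold descCycle dWord
  rw [show (j - 1) - (i - 1) = j - i by omega]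
  congr 1
  apply List.map_congr_left
  intro t _
  congr 1
  omega

section Poly
variable {R : Type*} [Monoid R]

lemma range_map_prod_succ (f : ℕ → R) (m : ℕ) :
    ((List.range (m + 1)).map f).prod = f 0 * ((List.range m).map (fun k => f (k + 1))).prod := by
  rw [List.range_succ_eq_map, List.map_cons, List.prod_cons, List.map_map]
  rfl

lemma prod_swap_of_forall (u : R) (f1 f2 : ℕ → R) :
    ∀ m, (∀ k, k < m → u * f1 k = f2 k * u) →
      u * ((List.range m).map f1).prod = ((List.range m).map f2).prod * u := by
  intro m
  induction m with
  | zero => simp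
  | succ m ih =>
    intro hm
    rw [List.range_succ, List.map_append, List.prod_append, List.map_append, List.prod_append,
      List.map_singleton, List.prod_singleton, List.map_singleton, List.prod_singleton,
      ← mul_assoc, ih (fun k hk => hm k (by omega)), mul_assoc, hm m (by omega), ← mul_assoc]
end Poly

section PermAlg
variable {n : ℕ}

local notation "σP" => (fun c => adjSwap n (c - 1))

lemma hcommP : ∀ i j, 1 ≤ i → i + 2 ≤ j → j ≤ n - 1 →
    σP i * σP j = σP j * σP i := by
  intro i j hi hij _
  exact adjSwap_comm (i - 1) (j - 1) (by omega)

lemma hbraidP : ∀ i, 1 ≤ i → i + 1 ≤ n - 1 →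
    σP i * σP (i + 1) * σP i = σP (i + 1) * σP i * σP (i + 1) := by
  intro i hi hin
  simp only
  rw [show i + 1 - 1 = i by omega]
  have h := adjSwap_braid (n := n) (i - 1) (by omega)
  rwa [show i - 1 + 1 = i by omega] at h

lemma descCycle_succ (n i : ℕ) : descCycle n i (i + 1) = adjSwap n (i - 1) := by
  unfold descCycle
  rw [show i + 1 - i = 1 by omega]
  simp only [List.range_succ, List.range_zero, List.nil_append, List.map_cons,
    List.map_nil, List.prod_cons, List.prod_nil, mul_one]
  congr 1

/-- The product `(1 - c_{i,j})(1 - c_{i+1,j})⋯(1 - c_{j-1,j})`. -/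
noncomputable def Apoly (n i j : ℕ) : MonoidAlgebra ℂ (Equiv.Perm (Fin n)) :=
  ((List.range (j - i)).map
    (fun k => 1 - MonoidAlgebra.of ℂ _ (descCycle n (i + k) j))).prod

lemma Apoly_peel {i j : ℕ} (hij : i < j) :
    Apoly n i j = (1 - MonoidAlgebra.of ℂ _ (descCycle n i j)) * Apoly n (i + 1) j := by
  unfold Apoly
  rw [show j - i = (j - (i + 1)) + 1 by omega, range_map_prod_succ]
  have h2 : List.map (fun k => 1 - MonoidAlgebra.of ℂ (Equiv.Perm (Fin n))
        (descCycle n (i + (k + 1)) j)) (List.range (j - (i + 1)))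
      = List.map (fun k => 1 - MonoidAlgebra.of ℂ (Equiv.Perm (Fin n))
        (descCycle n (i + 1 + k) j)) (List.range (j - (i + 1))) := by
    apply List.map_congr_left
    intro k _
    rw [show i + (k + 1) = i + 1 + k by omega]
  rw [h2]
  simp

lemma conj_Apoly {i j : ℕ} (hi : 1 ≤ i) (hij : i + 2 ≤ j) (hjn : j ≤ n) :
    MonoidAlgebra.of ℂ _ (descCycle n i j) * Apoly n (i + 1) j
      = Apoly n i (j - 1) * MonoidAlgebra.of ℂ _ (descCycle n i j) := by
  unfold Apoly
  rw [show j - (i + 1) = (j - 1) - i by omega]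
  apply prod_swap_of_forall
  intro k hk
  have hgrp : descCycle n i j * descCycle n (i + 1 + k) j
      = descCycle n (i + k) (j - 1) * descCycle n i j := by
    rw [descCycle_eq_dWord hi, descCycle_eq_dWord (show 1 ≤ i + 1 + k by omega),
      descCycle_eq_dWord (show 1 ≤ i + k by omega),
      show i + 1 + k - 1 = i + k by omega, show i + k - 1 = (i + k) - 1 by rfl]
    have := dWord_conj σP (n - 1) hcommP hbraidP
      (b := i - 1) (e := i + k) (a := j - 1) (by omega) (by omega) (by omega)
    rw [this]
  rw [mul_sub, sub_mul, mul_one, one_mul, ← map_mul, ← map_mul, hgrp]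

lemma P_eq_Apoly (P : ℕ → ℕ → MonoidAlgebra ℂ (Equiv.Perm (Fin n)))
    (hPii : ∀ i, 1 ≤ i → i ≤ n → P i i = 1)
    (hPii1 : ∀ i, 1 ≤ i → i + 1 ≤ n →
      P i (i + 1) = 1 - MonoidAlgebra.of ℂ _ (adjSwap n (i - 1)))
    (hPrec : ∀ i j, 1 ≤ i → i + 2 ≤ j → j ≤ n →
      P i j = P (i + 1) j - P i (j - 1) * MonoidAlgebra.of ℂ _ (descCycle n i j)) :
    ∀ j, j ≤ n → ∀ i, 1 ≤ i → i ≤ j → P i j = Apoly n i j := by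
  intro j
  induction j using Nat.strong_induction_on with
  | _ j ihj =>
    intro hjn i
    obtain ⟨d, hd⟩ : ∃ d, j - i = d := ⟨j - i, rfl⟩
    induction d generalizing i with
    | zero =>
      intro hi hij
      have : i = j := by omega
      subst this
      rw [hPii i hi hjn]
      unfold Apoly
      simp
    | succ d ihd =>
      intro hi hij
      rcases Nat.lt_or_ge (i + 1) j with hlt | hge
      · -- i + 2 ≤ j
        rw [hPrec i j hi (by omega) hjn,
          ihd (i + 1) (by omega) (by omega) (by omega),
          ihj (j - 1) (by omega) (by omega) i hi (by omega),
          Apoly_peel (show i < j by omega), sub_mul, one_mul,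
          conj_Apoly hi (by omega) hjn]
      · -- j = i + 1
        have hj : j = i + 1 := by omega
        subst hj
        rw [hPii1 i hi (by omega)]
        unfold Apoly
        rw [show i + 1 - i = 1 by omega]
        simp only [List.range_succ, List.range_zero, List.nil_append, List.map_cons,
          List.map_nil, List.prod_cons, List.prod_nil, mul_one, Nat.add_zero]
        rw [descCycle_succ]
end PermAlg

section Main
variable {n : ℕ} {G : Type*} [Group G] (σ : ℕ → G) (T : Equiv.Perm (Fin n) → G)
  (hT : ∀ (w : Equiv.Perm (Fin n)) (i : ℕ), i + 1 < n →
      (Finset.univ.filter (fun p : Fin n × Fin n =>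
          p.1 < p.2 ∧ (adjSwap n i * w) p.2 < (adjSwap n i * w) p.1)).card =
        (Finset.univ.filter (fun p : Fin n × Fin n =>
          p.1 < p.2 ∧ w p.2 < w p.1)).card + 1 →
      T (adjSwap n i * w) = σ (i + 1) * T w)
  (hT1 : T 1 = 1)

local notation "σP" => (fun c => adjSwap n (c - 1))

/-- The product `(1 - τ_{i})(1 - τ_{i+1})⋯(1 - τ_{n-1})` in `ℂ[G]`. -/
noncomputable def Bpoly (σ : ℕ → G) (n i : ℕ) : MonoidAlgebra ℂ G :=
  ((List.range (n - i)).map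
    (fun k => 1 - MonoidAlgebra.of ℂ G (dWord σ (i + k - 1) (n - 1)))).prod

lemma Bpoly_peel {i : ℕ} (hi : 1 ≤ i) (hin : i < n) :
    Bpoly σ n i = (1 - MonoidAlgebra.of ℂ G (dWord σ (i - 1) (n - 1))) * Bpoly σ n (i + 1) := by
  unfold Bpoly
  rw [show n - i = (n - (i + 1)) + 1 by omega, range_map_prod_succ]
  have h2 : List.map (fun k => 1 - MonoidAlgebra.of ℂ G
        (dWord σ (i + (k + 1) - 1) (n - 1))) (List.range (n - (i + 1)))
      = List.map (fun k => 1 - MonoidAlgebra.of ℂ G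
        (dWord σ (i + 1 + k - 1) (n - 1))) (List.range (n - (i + 1))) := by
    apply List.map_congr_left
    intro k _
    rw [show i + (k + 1) - 1 = i + 1 + k - 1 by omega]
  rw [h2]
  rw [show i + 0 - 1 = i - 1 by omega]

include hT hT1 in
lemma main_lift (hn : 2 ≤ n) :
    ∀ d i, i + d = n → 1 ≤ i →
      ∀ l : List ℕ, l.Chain' (· < ·) → (∀ x ∈ l, 1 ≤ x ∧ x < i) →
      MonoidAlgebra.mapDomain T (MonoidAlgebra.of ℂ (Equiv.Perm (Fin n))
          ((l.map (fun k => dWord σP (k - 1) (n - 1))).prod) * Apoly n i n)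
        = MonoidAlgebra.of ℂ G ((l.map (fun k => dWord σ (k - 1) (n - 1))).prod)
          * Bpoly σ n i := by
  intro d
  induction d with
  | zero =>
    intro i hi hi1 l hchain hmem
    have hin : i = n := by omega
    subst hin
    unfold Apoly Bpoly
    simp only [Nat.sub_self, List.range_zero, List.map_nil, List.prod_nil, mul_one]
    rw [MonoidAlgebra.of_apply, MonoidAlgebra.of_apply, MonoidAlgebra.mapDomain_single,
      T_cycleProd σ T hT l hchain (fun x hx => ⟨(hmem x hx).1, by have := (hmem x hx).2; omega⟩)
        hT1]
  | succ d ih =>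
    intro i hi hi1 l hchain hmem
    have hin : i < n := by omega
    have hsub : ∀ X Y : MonoidAlgebra ℂ (Equiv.Perm (Fin n)),
        MonoidAlgebra.mapDomain T (X - Y) = MonoidAlgebra.mapDomain T X - MonoidAlgebra.mapDomain T Y :=
      fun X Y => eq_sub_of_add_eq (by rw [← MonoidAlgebra.mapDomain_add, sub_add_cancel])
    have happend : ((l ++ [i]).map (fun k => dWord σP (k - 1) (n - 1))).prod
        = (l.map (fun k => dWord σP (k - 1) (n - 1))).prod * dWord σP (i - 1) (n - 1) := by
      rw [List.map_append, List.prod_append, List.map_singleton, List.prod_singleton]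
    have happendG : ((l ++ [i]).map (fun k => dWord σ (k - 1) (n - 1))).prod
        = (l.map (fun k => dWord σ (k - 1) (n - 1))).prod * dWord σ (i - 1) (n - 1) := by
      rw [List.map_append, List.prod_append, List.map_singleton, List.prod_singleton]
    have hchain' : (l ++ [i]).Chain' (· < ·) := by
      apply List.IsChain.append hchain (List.isChain_singleton i)
      intro x hx y hy
      simp only [List.head?_cons, Option.mem_def, Option.some.injEq] at hy
      subst hy
      obtain ⟨hgl, hxl⟩ := List.mem_getLast?_eq_getLast hx
      exact (hmem x (hxl ▸ List.getLast_mem hgl)).2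
    have hmem' : ∀ x ∈ l ++ [i], 1 ≤ x ∧ x < i + 1 := by
      intro x hx
      rcases List.mem_append.mp hx with hx | hx
      · have := hmem x hx; omega
      · simp only [List.mem_singleton] at hx; omega
    rw [Apoly_peel hin, sub_mul, one_mul, mul_sub, ← mul_assoc, ← map_mul,
      descCycle_eq_dWord hi1, ← happend, hsub,
      ih (i + 1) (by omega) (by omega) l hchain (fun x hx => (fun h2 => ⟨(hmem x hx).1, by omega⟩) (hmem x hx).2),
      ih (i + 1) (by omega) (by omega) (l ++ [i]) hchain' hmem',
      happendG, map_mul, Bpoly_peel σ hi1 hin, sub_mul, one_mul, mul_sub, mul_assoc]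
end Main

/-- For `n ≥ 2`, the Dynkin element `P_n = T_{P_{1,n}} ∈ ℂ[B_n]` satisfies
`P_n = (1 - σ_{n-1}σ_{n-2}⋯σ_1)(1 - σ_{n-1}σ_{n-2}⋯σ_2)⋯(1 - σ_{n-1}σ_{n-2})(1 - σ_{n-1})`,
where `P_{i,j} ∈ ℂ[S_n]` is defined recursively by `P_{i,i} = 1`,
`P_{i,i+1} = 1 - (i,i+1)`, and `P_{i,j} = P_{i+1,j} - P_{i,j-1}·(i,j,j-1,…,i+1)`,
and `T` is the Matsumoto section applied term by term (linearly extended to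
`ℂ[S_n] → ℂ[B_n]` via `Finsupp.mapDomain`, so each signed permutation lifts to
its Matsumoto lift with the same coefficient).  The braid group is presented by
any group `G` with elements `σ_1, …, σ_{n-1}` satisfying the braid relations;
the Matsumoto section `T : S_n → B_n` is characterized by `T(1) = 1` and
`T(s_{i+1} w) = σ_{i+1} T(w)` whenever the length increases by one. -/
theorem dynkin_element_decomposition {G : Type*} [Group G] (n : ℕ) (hn : 2 ≤ n)
    (σ : ℕ → G)
    (hcomm : ∀ i j, 1 ≤ i → i + 2 ≤ j → j ≤ n - 1 → σ i * σ j = σ j * σ i)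
    (hbraid : ∀ i, 1 ≤ i → i + 1 ≤ n - 1 →
      σ i * σ (i + 1) * σ i = σ (i + 1) * σ i * σ (i + 1))
    (T : Equiv.Perm (Fin n) → G)
    (hT1 : T 1 = 1)
    (hT : ∀ (w : Equiv.Perm (Fin n)) (i : ℕ), i + 1 < n →
      (Finset.univ.filter (fun p : Fin n × Fin n =>
          p.1 < p.2 ∧ (adjSwap n i * w) p.2 < (adjSwap n i * w) p.1)).card =
        (Finset.univ.filter (fun p : Fin n × Fin n =>
          p.1 < p.2 ∧ w p.2 < w p.1)).card + 1 →
      T (adjSwap n i * w) = σ (i + 1) * T w)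
    (P : ℕ → ℕ → MonoidAlgebra ℂ (Equiv.Perm (Fin n)))
    (hPii : ∀ i, 1 ≤ i → i ≤ n → P i i = 1)
    (hPii1 : ∀ i, 1 ≤ i → i + 1 ≤ n →
      P i (i + 1) = 1 - MonoidAlgebra.of ℂ _ (adjSwap n (i - 1)))
    (hPrec : ∀ i j, 1 ≤ i → i + 2 ≤ j → j ≤ n →
      P i j = P (i + 1) j - P i (j - 1) * MonoidAlgebra.of ℂ _ (descCycle n i j)) :
    MonoidAlgebra.mapDomain T (P 1 n) =
      ((List.range (n - 1)).map (fun r =>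
        (1 : MonoidAlgebra ℂ G) -
          MonoidAlgebra.of ℂ G
            (((List.range (n - 1 - r)).map (fun t => σ (n - 1 - t))).prod))).prod := by
  have hP := P_eq_Apoly P hPii hPii1 hPrec n le_rfl 1 le_rfl (by omega)
  rw [hP]
  have hmain := main_lift σ T hT hT1 hn (n - 1) 1 (by omega) le_rfl []
    List.isChain_nil (by simp)
  simp only [List.map_nil, List.prod_nil, map_one, one_mul] at hmain
  rw [hmain]
  unfold Bpoly
  congr 1
  apply List.map_congr_left
  intro k _
  rw [show 1 + k - 1 = k by omega]
  rfl
end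

section
/- Let q ∈ ℂ* be not a root of unity and let s, t be positive integers. In the Yetter-Drinfel'd module V over ℂ[ℤ²] of U_q(sl_3)-type (braiding matrix q_{11} = q_{22} = q², q_{12} = q_{21} = q^{-1}), the full twist θ_{s+t} acts on the monomial E_1^s E_2^t ∈ V^{⊗(s+t)} by the scalar q^{2(s² - s + t² - t - st)}. Consequently θ_{s+t}(E_1^sE_2^t) = E_1^sE_2^t if and only if (s-t)² + (s-1)² + (t-1)² = 2, whose only positive integer solutions are (s,t) ∈ {(2,2),(2,1),(1,2)}. -/
open scoped BigOperators

/-- The degree-`n` part `V^{⊗n}` of the tensor algebra of a vector space `V`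
with basis indexed by `ι`, modelled on its monomial basis. -/
abbrev TPow (ι : Type*) (n : ℕ) : Type _ := (Fin n → ι) →₀ ℂ

/-- The action of the braid group generator `σ_{k+1}` (acting in tensor
positions `k, k+1`, 0-indexed) on `V^{⊗n}` for a braiding of diagonal type
`σ(v_i ⊗ v_j) = q i j • v_j ⊗ v_i`. -/
noncomputable def diagGen {ι : Type*} (q : ι → ι → ℂ) (n k : ℕ) :
    Module.End ℂ (TPow ι n) :=
  Finsupp.lsum ℂ fun f =>
    if h : k + 1 < n then
      LinearMap.toSpanSingleton ℂ _
        (q (f ⟨k, Nat.lt_of_succ_lt h⟩) (f ⟨k + 1, h⟩) •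
          Finsupp.single (f ∘ Equiv.swap ⟨k, Nat.lt_of_succ_lt h⟩ ⟨k + 1, h⟩) 1)
    else 0

/-- The full twist `θ_n = (σ_{n-1}σ_{n-2}⋯σ_1)^n` acting on `V^{⊗n}`. -/
noncomputable def fullTwist {ι : Type*} (q : ι → ι → ℂ) (n : ℕ) :
    Module.End ℂ (TPow ι n) :=
  (((List.range (n - 1)).reverse).map (diagGen q n)).prod ^ n

/-- The braiding matrix of `U_q(sl_3)`-type on the basis `E_1, E_2`:
`q_{11} = q_{22} = q²`, `q_{12} = q_{21} = q⁻¹`. -/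
noncomputable def sl3Braiding (q : ℂ) : Fin 2 → Fin 2 → ℂ :=
  fun i j => if i = j then q ^ 2 else q⁻¹

/-- The monomial `E_1^s E_2^t` in `V^{⊗(s+t)}`. -/
def sl3Monomial (s t : ℕ) : Fin (s + t) → Fin 2 :=
  fun i => if (i : ℕ) < s then 0 else 1

lemma diagGen_single {ι : Type*} (q : ι → ι → ℂ) {n k : ℕ} (h : k + 1 < n) (f : Fin n → ι) :
    diagGen q n k (Finsupp.single f 1) =
      q (f ⟨k, Nat.lt_of_succ_lt h⟩) (f ⟨k + 1, h⟩) •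
        Finsupp.single (f ∘ Equiv.swap ⟨k, Nat.lt_of_succ_lt h⟩ ⟨k + 1, h⟩) 1 := by
  unfold diagGen
  rw [Finsupp.lsum_single, dif_pos h, LinearMap.toSpanSingleton_apply, one_smul]

def chainFun (n k : ℕ) : Fin n → Fin n := fun i =>
  if i.val < k then ⟨(i.val + 1) % n, Nat.mod_lt _ i.pos⟩
  else if i.val = k then ⟨0, i.pos⟩ else i

lemma chainFun_zero (n : ℕ) : chainFun n 0 = id := by
  funext i
  simp only [chainFun, Nat.not_lt_zero, if_false, id]
  split_ifs with h
  · exact (Fin.ext h.symm)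
  · rfl

lemma chainFun_swap {n k : ℕ} (h : k + 1 < n) :
    chainFun n k ∘ Equiv.swap ⟨k, Nat.lt_of_succ_lt h⟩ ⟨k + 1, h⟩ = chainFun n (k + 1) := by
  funext i
  simp only [Function.comp_apply]
  rcases eq_or_ne (i : ℕ) k with h1 | h1
  · have hi : i = ⟨k, Nat.lt_of_succ_lt h⟩ := Fin.ext h1
    rw [hi, Equiv.swap_apply_left]
    simp only [chainFun]
    rw [if_neg (by simp), if_neg (by simp), if_pos (by simp)]
    exact Fin.ext (by simp [Nat.mod_eq_of_lt h])
  · rcases eq_or_ne (i : ℕ) (k + 1) with h2 | h2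
    · have hi : i = ⟨k + 1, h⟩ := Fin.ext h2
      rw [hi, Equiv.swap_apply_right]
      simp only [chainFun]
      simp
    · rw [Equiv.swap_apply_of_ne_of_ne (by simp [Fin.ext_iff, h1]) (by simp [Fin.ext_iff, h2])]
      simp only [chainFun]
      by_cases h3 : (i : ℕ) < k
      · rw [if_pos h3, if_pos (by omega)]
      · rw [if_neg h3, if_neg h1, if_neg (show ¬(i : ℕ) < k + 1 by omega), if_neg h2]

lemma chainFun_self {n k : ℕ} (hk : k < n) : chainFun n k ⟨k, hk⟩ = ⟨0, Nat.lt_of_le_of_lt k.zero_le hk⟩ := by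
  simp [chainFun]

lemma chainFun_gt {n k : ℕ} (i : Fin n) (h : k < i.val) : chainFun n k i = i := by
  simp only [chainFun]
  rw [if_neg (by omega), if_neg (by omega)]

lemma partial_pass {ι : Type*} (q : ι → ι → ℂ) {n : ℕ} (f : Fin n → ι) {k : ℕ} (hk : k < n) :
    (((List.range k).reverse).map (diagGen q n)).prod (Finsupp.single f 1) =
      (∏ j ∈ Finset.range k,
        q (f ⟨0, Nat.lt_of_le_of_lt k.zero_le hk⟩)
          (f ⟨(j + 1) % n, Nat.mod_lt _ (Nat.lt_of_le_of_lt k.zero_le hk)⟩)) •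
        Finsupp.single (f ∘ chainFun n k) 1 := by
  induction k with
  | zero => simp [chainFun_zero]
  | succ k ih =>
    have hstep : ((List.range (k + 1)).reverse).map (diagGen q n) =
        diagGen q n k :: ((List.range k).reverse).map (diagGen q n) := by
      simp [List.range_succ]
    rw [hstep, List.prod_cons, Module.End.mul_apply, ih (Nat.lt_of_succ_lt hk), map_smul,
      diagGen_single q hk]
    rw [Function.comp_assoc, chainFun_swap hk]
    have e1 : (f ∘ chainFun n k) ⟨k, Nat.lt_of_succ_lt hk⟩
        = f ⟨0, Nat.lt_of_le_of_lt (k+1).zero_le hk⟩ := by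
      simp only [Function.comp_apply, chainFun_self (Nat.lt_of_succ_lt hk)]
    have e2 : (f ∘ chainFun n k) ⟨k + 1, hk⟩ = f ⟨(k + 1) % n, Nat.mod_lt _ (Nat.lt_of_le_of_lt (k+1).zero_le hk)⟩ := by
      rw [Function.comp_apply, chainFun_gt ⟨k+1, hk⟩ (Nat.lt_succ_self k)]
      congr 1
      exact Fin.ext (by simp [Nat.mod_eq_of_lt hk])
    rw [e1, e2, smul_smul, Finset.prod_range_succ]

def rotN (n m : ℕ) (i : Fin n) : Fin n := ⟨(i.val + m) % n, Nat.mod_lt _ i.pos⟩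

lemma rotN_zero {ι : Type*} {n : ℕ} (f : Fin n → ι) : f ∘ rotN n 0 = f := by
  funext i
  simp [rotN, Nat.mod_eq_of_lt i.isLt]

lemma chainFun_eq_rot {n : ℕ} (hn : 0 < n) : chainFun n (n - 1) = rotN n 1 := by
  funext i
  by_cases h : (i : ℕ) < n - 1
  · simp only [chainFun, if_pos h, rotN]
  · have h2 : (i : ℕ) = n - 1 := by have := i.isLt; omega
    simp only [chainFun, if_neg h, if_pos h2, rotN]
    have h3 : n - 1 + 1 = n := by omega
    exact Fin.ext (by simp [h2, h3])

lemma rotN_comp {n m : ℕ} : rotN n m ∘ rotN n 1 = rotN n (m + 1) := by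
  funext i
  simp only [Function.comp_apply, rotN, Nat.mod_add_mod]
  exact Fin.ext (by simp; congr 1; omega)

lemma fullTwist_single {ι : Type*} (q : ι → ι → ℂ) {n : ℕ} (hn : 0 < n) (f : Fin n → ι) :
    fullTwist q n (Finsupp.single f 1) =
      (∏ m ∈ Finset.range n, ∏ j ∈ Finset.range (n - 1),
        q (f ⟨m % n, Nat.mod_lt _ hn⟩) (f ⟨(j + 1 + m) % n, Nat.mod_lt _ hn⟩)) •
        Finsupp.single (f ∘ rotN n n) 1 := by
  set P := (((List.range (n - 1)).reverse).map (diagGen q n)).prod with hP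
  have pass : ∀ g : Fin n → ι, P (Finsupp.single g 1) =
      (∏ j ∈ Finset.range (n - 1),
        q (g ⟨0, hn⟩) (g ⟨(j + 1) % n, Nat.mod_lt _ hn⟩)) •
        Finsupp.single (g ∘ rotN n 1) 1 := by
    intro g
    rw [hP, partial_pass q g (Nat.sub_lt hn one_pos), chainFun_eq_rot hn]
  have key : ∀ m : ℕ, (P ^ m) (Finsupp.single f 1) =
      (∏ l ∈ Finset.range m, ∏ j ∈ Finset.range (n - 1),
        q (f ⟨l % n, Nat.mod_lt _ hn⟩) (f ⟨(j + 1 + l) % n, Nat.mod_lt _ hn⟩)) •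
        Finsupp.single (f ∘ rotN n m) 1 := by
    intro m
    induction m with
    | zero => simp [rotN_zero]
    | succ l ih =>
      rw [pow_succ', Module.End.mul_apply, ih, map_smul, pass (f ∘ rotN n l)]
      rw [Function.comp_assoc, rotN_comp, smul_smul, Finset.prod_range_succ]
      congr 2
      apply Finset.prod_congr rfl
      intro j _
      simp only [Function.comp_apply, rotN]
      congr 2
      · exact Fin.ext (by simp)
      · exact Fin.ext (by simp [Nat.mod_add_mod])
  exact key n

lemma prod_range_mod {n : ℕ} (hn : 0 < n) {m : ℕ} (hm : m < n) (g : Fin n → ℂ) :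
    ∏ j ∈ Finset.range n, g ⟨(j + m) % n, Nat.mod_lt _ hn⟩ = ∏ i, g i := by
  apply Finset.prod_nbij' (i := fun j => (⟨(j + m) % n, Nat.mod_lt _ hn⟩ : Fin n))
    (j := fun i => ((i : ℕ) + (n - m)) % n)
  · intro a _; exact Finset.mem_univ _
  · intro b _; exact Finset.mem_range.2 (Nat.mod_lt _ hn)
  · intro a ha
    have ha' : a < n := Finset.mem_range.1 ha
    rw [Nat.mod_add_mod, show a + m + (n - m) = a + n by omega, Nat.add_mod_right,
      Nat.mod_eq_of_lt ha']
  · intro b _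
    refine Fin.ext ?_
    show ((((b : ℕ) + (n - m)) % n) + m) % n = b
    rw [Nat.mod_add_mod, show (b : ℕ) + (n - m) + m = (b : ℕ) + n by omega,
      Nat.add_mod_right, Nat.mod_eq_of_lt b.isLt]
  · intro a _; rfl

lemma prod_univ_monomial (s t : ℕ) (g : Fin 2 → ℂ) :
    ∏ i : Fin (s + t), g (sl3Monomial s t i) = g 0 ^ s * g 1 ^ t := by
  have h1 : ∀ i : Fin s, sl3Monomial s t (Fin.castAdd t i) = 0 := by
    intro i
    simp only [sl3Monomial, Fin.coe_castAdd]
    rw [if_pos i.isLt]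
  have h2 : ∀ i : Fin t, sl3Monomial s t (Fin.natAdd s i) = 1 := by
    intro i
    simp only [sl3Monomial, Fin.coe_natAdd]
    rw [if_neg (by omega)]
  rw [Fin.prod_univ_add]
  simp [h1, h2]

lemma inner_eval (q : ℂ) (hq : q ≠ 0) {s t m : ℕ} (hm : m < s + t) (hn : 0 < s + t) :
    ∏ j ∈ Finset.range (s + t - 1),
      sl3Braiding q (sl3Monomial s t ⟨m % (s + t), Nat.mod_lt _ hn⟩)
        (sl3Monomial s t ⟨(j + 1 + m) % (s + t), Nat.mod_lt _ hn⟩) =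
      (sl3Braiding q (sl3Monomial s t ⟨m % (s + t), Nat.mod_lt _ hn⟩) 0 ^ s *
        sl3Braiding q (sl3Monomial s t ⟨m % (s + t), Nat.mod_lt _ hn⟩) 1 ^ t) * (q ^ 2)⁻¹ := by
  set c := sl3Monomial s t ⟨m % (s + t), Nat.mod_lt _ hn⟩ with hc
  set G : ℕ → ℂ := fun j =>
    sl3Braiding q c (sl3Monomial s t ⟨(j + m) % (s + t), Nat.mod_lt _ hn⟩) with hG
  have h1 : ∏ j ∈ Finset.range (s + t), G j =
      (∏ j ∈ Finset.range (s + t - 1), G (j + 1)) * G 0 := by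
    conv_lhs => rw [show s + t = (s + t - 1) + 1 by omega]
    exact Finset.prod_range_succ' G (s + t - 1)
  have h2 : ∏ j ∈ Finset.range (s + t), G j =
      sl3Braiding q c 0 ^ s * sl3Braiding q c 1 ^ t := by
    rw [hG]
    rw [prod_range_mod hn hm (fun i => sl3Braiding q c (sl3Monomial s t i))]
    exact prod_univ_monomial s t (sl3Braiding q c)
  have h3 : G 0 = q ^ 2 := by
    rw [hG]
    show sl3Braiding q c (sl3Monomial s t ⟨(0 + m) % (s + t), Nat.mod_lt _ hn⟩) = q ^ 2
    have he : (⟨(0 + m) % (s + t), Nat.mod_lt _ hn⟩ : Fin (s + t)) =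
        ⟨m % (s + t), Nat.mod_lt _ hn⟩ := Fin.ext (by rw [Nat.zero_add])
    rw [he, ← hc]
    simp [sl3Braiding]
  have h4 : ∏ j ∈ Finset.range (s + t - 1),
      sl3Braiding q c (sl3Monomial s t ⟨(j + 1 + m) % (s + t), Nat.mod_lt _ hn⟩) =
      ∏ j ∈ Finset.range (s + t - 1), G (j + 1) := rfl
  rw [h4, eq_mul_inv_iff_mul_eq₀ (pow_ne_zero 2 hq), ← h3, ← h1, h2]

lemma scalar_eval (q : ℂ) (hq : q ≠ 0) (s t : ℕ) (hs : 1 ≤ s) (ht : 1 ≤ t) (hn : 0 < s + t) :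
    (∏ m ∈ Finset.range (s + t), ∏ j ∈ Finset.range (s + t - 1),
      sl3Braiding q (sl3Monomial s t ⟨m % (s + t), Nat.mod_lt _ hn⟩)
        (sl3Monomial s t ⟨(j + 1 + m) % (s + t), Nat.mod_lt _ hn⟩)) =
    q ^ (2 * ((s : ℤ) ^ 2 - s + t ^ 2 - t - s * t)) := by
  set A : ℂ := ((q ^ 2) ^ s * (q⁻¹) ^ t) * (q ^ 2)⁻¹ with hA
  set B : ℂ := ((q⁻¹) ^ s * (q ^ 2) ^ t) * (q ^ 2)⁻¹ with hB
  have step1 : (∏ m ∈ Finset.range (s + t), ∏ j ∈ Finset.range (s + t - 1),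
      sl3Braiding q (sl3Monomial s t ⟨m % (s + t), Nat.mod_lt _ hn⟩)
        (sl3Monomial s t ⟨(j + 1 + m) % (s + t), Nat.mod_lt _ hn⟩)) =
      ∏ m ∈ Finset.range (s + t), (if m < s then A else B) := by
    apply Finset.prod_congr rfl
    intro m hm
    have hm' : m < s + t := Finset.mem_range.1 hm
    rw [inner_eval q hq hm' hn]
    have hcm : (⟨m % (s + t), Nat.mod_lt _ hn⟩ : Fin (s + t)) = ⟨m, hm'⟩ :=
      Fin.ext (Nat.mod_eq_of_lt hm')
    rw [hcm]
    by_cases hms : m < s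
    · rw [if_pos hms]
      have h0 : sl3Monomial s t ⟨m, hm'⟩ = 0 := if_pos hms
      rw [h0, hA]
      norm_num [sl3Braiding]
    · rw [if_neg hms]
      have h0 : sl3Monomial s t ⟨m, hm'⟩ = 1 := if_neg hms
      rw [h0, hB]
      norm_num [sl3Braiding]
  have step2 : ∏ m ∈ Finset.range (s + t), (if m < s then A else B) = A ^ s * B ^ t := by
    rw [Finset.prod_range_add]
    congr 1
    · rw [Finset.prod_congr rfl (fun m hm => if_pos (Finset.mem_range.1 hm)),
        Finset.prod_const, Finset.card_range]
    · rw [Finset.prod_congr rfl (fun m _ => if_neg (by omega : ¬ s + m < s)),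
        Finset.prod_const, Finset.card_range]
  have pow_z : ∀ (a : ℤ) (m : ℕ), (q ^ a) ^ m = q ^ (a * m) := by
    intro a m
    rw [← zpow_natCast (q ^ a) m, ← zpow_mul]
  have hA' : A = q ^ (2 * (s : ℤ) - t - 2) := by
    have : (2 * (s : ℤ) - t - 2) = (2 * s : ℕ) + (-(t : ℤ)) + (-(2:ℕ) : ℤ) := by push_cast; ring
    rw [this, hA, show (q ^ 2) ^ s = q ^ (2 * s) from by rw [pow_mul], inv_pow,
      ← zpow_natCast q (2 * s), ← zpow_natCast q t, ← zpow_natCast q 2,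
      ← zpow_neg, ← zpow_neg, ← zpow_add₀ hq, ← zpow_add₀ hq]
  have hB' : B = q ^ (2 * (t : ℤ) - s - 2) := by
    have : (2 * (t : ℤ) - s - 2) = (-(s : ℤ)) + (2 * t : ℕ) + (-(2:ℕ) : ℤ) := by push_cast; ring
    rw [this, hB, show (q ^ 2) ^ t = q ^ (2 * t) from by rw [pow_mul], inv_pow,
      ← zpow_natCast q (2 * t), ← zpow_natCast q s, ← zpow_natCast q 2,
      ← zpow_neg, ← zpow_neg, ← zpow_add₀ hq, ← zpow_add₀ hq]
  rw [step1, step2, hA', hB', pow_z, pow_z, ← zpow_add₀ hq]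
  congr 1
  push_cast
  ring

/-- Let `q` be nonzero and not a root of unity and `s, t ≥ 1`.  In the
`U_q(sl_3)`-type Yetter-Drinfel'd module, the full twist `θ_{s+t}` acts on the
monomial `E_1^s E_2^t` by the scalar `q^{2(s² - s + t² - t - st)}`.
Consequently `θ_{s+t}(E_1^sE_2^t) = E_1^sE_2^t` iff
`(s-t)² + (s-1)² + (t-1)² = 2`, whose only positive integer solutions are
`(s,t) ∈ {(2,2), (2,1), (1,2)}`. -/
theorem sl3_fullTwist_monomial (q : ℂ) (hq : q ≠ 0)
    (hroot : ∀ N : ℕ, 1 ≤ N → q ^ N ≠ 1) (s t : ℕ) (hs : 1 ≤ s) (ht : 1 ≤ t) :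
    fullTwist (sl3Braiding q) (s + t) (Finsupp.single (sl3Monomial s t) 1) =
      (q ^ (2 * ((s : ℤ) ^ 2 - s + t ^ 2 - t - s * t))) •
        Finsupp.single (sl3Monomial s t) 1 ∧
    (fullTwist (sl3Braiding q) (s + t) (Finsupp.single (sl3Monomial s t) 1) =
        Finsupp.single (sl3Monomial s t) 1 ↔
      ((s : ℤ) - t) ^ 2 + ((s : ℤ) - 1) ^ 2 + ((t : ℤ) - 1) ^ 2 = 2) ∧
    (((s : ℤ) - t) ^ 2 + ((s : ℤ) - 1) ^ 2 + ((t : ℤ) - 1) ^ 2 = 2 ↔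
      (s = 2 ∧ t = 2) ∨ (s = 2 ∧ t = 1) ∨ (s = 1 ∧ t = 2)) := by
  have hn : 0 < s + t := by omega
  have part1 : fullTwist (sl3Braiding q) (s + t) (Finsupp.single (sl3Monomial s t) 1) =
      (q ^ (2 * ((s : ℤ) ^ 2 - s + t ^ 2 - t - s * t))) •
        Finsupp.single (sl3Monomial s t) 1 := by
    rw [fullTwist_single (sl3Braiding q) hn (sl3Monomial s t)]
    have hfix : sl3Monomial s t ∘ rotN (s + t) (s + t) = sl3Monomial s t := by
      funext i
      simp only [Function.comp_apply, rotN]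
      congr 1
      exact Fin.ext (by simp [Nat.add_mod_right, Nat.mod_eq_of_lt i.isLt])
    rw [hfix, scalar_eval q hq s t hs ht hn]
  refine ⟨part1, ?_, ?_⟩
  · rw [part1]
    set E : ℤ := 2 * ((s : ℤ) ^ 2 - s + t ^ 2 - t - s * t) with hE
    have hiff1 : q ^ E • (Finsupp.single (sl3Monomial s t) (1 : ℂ)) =
        Finsupp.single (sl3Monomial s t) 1 ↔ q ^ E = 1 := by
      constructor
      · intro h
        have h2 := DFunLike.congr_fun h (sl3Monomial s t)
        simpa [Finsupp.smul_apply, Finsupp.single_eq_same, smul_eq_mul] using h2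
      · intro h; rw [h, one_smul]
    have hiff2 : q ^ E = 1 ↔ E = 0 := by
      constructor
      · intro h
        by_contra hE0
        rcases lt_or_gt_of_ne hE0 with hneg | hpos
        · have h1 : q ^ ((-E).toNat) = 1 := by
            rw [← zpow_natCast q, Int.toNat_of_nonneg (by omega), zpow_neg, h, inv_one]
          exact hroot _ (by omega) h1
        · have h1 : q ^ (E.toNat) = 1 := by
            rw [← zpow_natCast q, Int.toNat_of_nonneg (by omega), h]
          exact hroot _ (by omega) h1
      · intro h; rw [h, zpow_zero]
    have hkey : ((s : ℤ) - t) ^ 2 + ((s : ℤ) - 1) ^ 2 + ((t : ℤ) - 1) ^ 2 = E + 2 := by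
      rw [hE]; ring
    rw [hiff1, hiff2]
    constructor <;> intro h <;> linarith
  · constructor
    · intro h
      have h3 : 4 * (s : ℤ) ≤ 10 := by
        nlinarith [sq_nonneg ((s : ℤ) - t), sq_nonneg ((t : ℤ) - 1), sq_nonneg ((s : ℤ) - 3)]
      have h4 : 4 * (t : ℤ) ≤ 10 := by
        nlinarith [sq_nonneg ((s : ℤ) - t), sq_nonneg ((s : ℤ) - 1), sq_nonneg ((t : ℤ) - 3)]
      have hs2 : s ≤ 2 := by omega
      have ht2 : t ≤ 2 := by omega
      interval_cases s <;> interval_cases t <;> revert h <;> norm_num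
    · rintro (⟨rfl, rfl⟩ | ⟨rfl, rfl⟩ | ⟨rfl, rfl⟩) <;> norm_num
end
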